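/- Let m be a natural number and let N be a subgroup of the special unitary group SU(m) that is nilpotent of nilpotency class s with s ≥ 2. Then every element γ of the s-th term N_(s) of the lower central series of N satisfies γ^(m!) = 1 (each such γ is conjugate in SU(m) to a diagonal matrix whose entries are roots of unity of order at most m). -/

import Mathlib

/-- The special unitary group `SU(m)` is a group (inverse given by conjugate transpose). -/
noncomputable instance (m : ℕ) : Group (Matrix.specialUnitaryGroup (Fin m) ℂ) where
  inv A := ⟨star A.1, by
    obtain ⟨h1, h2⟩ := Matrix.mem_specialUnitaryGroup_iff.mp A.2
    refine Matrix.mem_specialUnitaryGroup_iff.mpr ⟨Unitary.star_mem h1, ?_⟩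
    rw [Matrix.star_eq_conjTranspose, Matrix.det_conjTranspose, h2, star_one]⟩
  inv_mul_cancel A := by
    obtain ⟨h1, _⟩ := Matrix.mem_specialUnitaryGroup_iff.mp A.2
    exact Subtype.ext ((Unitary.mem_iff.mp h1).1)

open scoped Matrix.Norms.L2Operator in
noncomputable instance matrixCStarAlg (m : ℕ) : CStarAlgebra (Matrix (Fin m) (Fin m) ℂ) := { }

/-- Any eigenvalue of an element `γ` of the commutator subgroup of `N ≤ SU(m)` that is
central in `N` satisfies `μ ^ m! = 1`. -/
private lemma eigenvalue_pow_factorial_eq_one (m : ℕ)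
    (N : Subgroup (Matrix.specialUnitaryGroup (Fin m) ℂ)) (γ : ↥N)
    (hcen : ∀ n : ↥N, γ * n = n * γ)
    (hcomm : γ ∈ commutator ↥N)
    {μ : ℂ} (hμ : μ ∈ spectrum ℂ (γ.1.1 : Matrix (Fin m) (Fin m) ℂ)) :
    μ ^ m.factorial = 1 := by
  classical
  rw [← AlgEquiv.spectrum_eq (Matrix.toLinAlgEquiv' (R := ℂ) (n := Fin m)) γ.1.1] at hμ
  have hasEig : Module.End.HasEigenvalue (Matrix.toLinAlgEquiv' γ.1.1) μ :=
    Module.End.hasEigenvalue_iff_mem_spectrum.mpr hμ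
  set V : Submodule ℂ (Fin m → ℂ) :=
    Module.End.eigenspace (Matrix.toLinAlgEquiv' γ.1.1) μ with hVdef
  -- invariance of V under every element of N
  have hinv : ∀ n : ↥N, ∀ x ∈ V, (Matrix.toLinAlgEquiv' n.1.1) x ∈ V := by
    intro n x hx
    have hmat : γ.1.1 * n.1.1 = n.1.1 * γ.1.1 := by
      have := congrArg (fun z : ↥N => z.1.1) (hcen n)
      exact this
    rw [hVdef, Module.End.mem_eigenspace_iff] at hx ⊢
    have hUx : (Matrix.toLinAlgEquiv' γ.1.1) ((Matrix.toLinAlgEquiv' n.1.1) x)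
        = (Matrix.toLinAlgEquiv' n.1.1) ((Matrix.toLinAlgEquiv' γ.1.1) x) := by
      have h2 := congrArg (fun M => (Matrix.toLinAlgEquiv' (R := ℂ) (n := Fin m)) M x) hmat
      simpa [map_mul, Module.End.mul_apply] using h2
    rw [hUx, hx, map_smul]
  -- the determinant-of-restriction homomorphism
  let res : ↥N →* Module.End ℂ V :=
    { toFun := fun n => LinearMap.restrict (Matrix.toLinAlgEquiv' n.1.1) (hinv n)
      map_one' := by
        apply LinearMap.ext; intro x
        apply Subtype.ext
        simp [LinearMap.restrict_coe_apply]
      map_mul' := by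
        intro a b
        apply LinearMap.ext; intro x
        apply Subtype.ext
        have hab : ((a * b : ↥N) : Matrix.specialUnitaryGroup (Fin m) ℂ).1
            = a.1.1 * b.1.1 := rfl
        simp [LinearMap.restrict_coe_apply, Module.End.mul_apply, hab, map_mul] }
  let φ : ↥N →* ℂ := (LinearMap.det : Module.End ℂ V →* ℂ).comp res
  have hφγ : φ γ = 1 := by
    have hker := Abelianization.commutator_subset_ker φ.toHomUnits hcomm
    have := congrArg Units.val (MonoidHom.mem_ker.mp hker)
    simpa using this
  -- compute φ γ
  have hres : res γ = μ • (1 : Module.End ℂ V) := by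
    apply LinearMap.ext; intro x
    apply Subtype.ext
    have hx : (Matrix.toLinAlgEquiv' γ.1.1) x.1 = μ • x.1 :=
      Module.End.mem_eigenspace_iff.mp x.2
    simp [res, LinearMap.restrict_coe_apply, hx]
  have hdet : φ γ = μ ^ Module.finrank ℂ V := by
    show LinearMap.det (res γ) = _
    rw [hres, LinearMap.det_smul, map_one, mul_one]
  have hd1 : 0 < Module.finrank ℂ V := by
    haveI : Nontrivial V := Submodule.nontrivial_iff_ne_bot.mpr hasEig
    exact Module.finrank_pos
  have hd2 : Module.finrank ℂ V ≤ m := by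
    have := Submodule.finrank_le V
    rwa [Module.finrank_fin_fun] at this
  obtain ⟨c, hc⟩ := Nat.dvd_factorial hd1 hd2
  rw [hc, pow_mul, ← hdet, hφγ, one_pow]

/-- If `N ≤ SU(m)` is nilpotent of nilpotency class `s ≥ 2`, then every element `γ` of the
`s`-th term `N_(s) = lowerCentralSeries N (s-1)` of the lower central series of `N`
satisfies `γ^(m!) = 1`. -/
theorem lcs_top_term_elements_torsion (m : ℕ)
    (N : Subgroup (Matrix.specialUnitaryGroup (Fin m) ℂ)) (s : ℕ)
    (hs : 2 ≤ s)
    (h1 : Subgroup.lowerCentralSeries (⊤ : Subgroup ↥N) (s - 1) ≠ ⊥)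
    (h2 : Subgroup.lowerCentralSeries (⊤ : Subgroup ↥N) s = ⊥) :
    ∀ γ : ↥N, γ ∈ Subgroup.lowerCentralSeries (⊤ : Subgroup ↥N) (s - 1) → γ ^ (Nat.factorial m) = 1 := by
  intro γ hγ
  -- γ is central in N
  have hcen : ∀ n : ↥N, γ * n = n * γ := by
    intro n
    open scoped commutatorElement in
    have hmem : ⁅γ, n⁆ ∈ Subgroup.lowerCentralSeries (⊤ : Subgroup ↥N) s := by
      have hfact : s - 1 + 1 = s := by omega
      rw [← hfact, Subgroup.lowerCentralSeries_succ]
      exact Subgroup.commutator_mem_commutator hγ (Subgroup.mem_top n)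
    rw [h2, Subgroup.mem_bot] at hmem
    exact commutatorElement_eq_one_iff_mul_comm.mp hmem
  -- γ is in the commutator subgroup of N
  have hcomm : γ ∈ commutator ↥N := by
    rw [← Subgroup.top_lowerCentralSeries_one]
    exact Subgroup.lowerCentralSeries_antitone _ (by omega) hγ
  -- the underlying matrix is star-normal (unitary)
  set U : Matrix (Fin m) (Fin m) ℂ := γ.1.1 with hU
  have hunit := (Matrix.mem_specialUnitaryGroup_iff.mp γ.1.2).1
  obtain ⟨hu1, hu2⟩ := Unitary.mem_iff.mp hunit
  haveI : IsStarNormal U := ⟨by rw [commute_iff_eq, hu1, hu2]⟩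
  -- every point of the spectrum is an m!-torsion root of unity
  have hspec : ∀ μ ∈ spectrum ℂ U, μ ^ m.factorial = 1 := fun μ hμ =>
    eigenvalue_pow_factorial_eq_one m N γ hcen hcomm hμ
  -- continuous functional calculus: U ^ m! = 1
  have hUpow : U ^ m.factorial = 1 := by
    rw [← cfc_pow_id (R := ℂ) U m.factorial, ← cfc_const_one ℂ U]
    exact cfc_congr fun μ hμ => hspec μ hμ
  -- transfer back to the subgroup
  have coe_pow : ∀ k : ℕ, ((γ ^ k : ↥N) : Matrix.specialUnitaryGroup (Fin m) ℂ).1 = U ^ k := by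
    intro k
    induction k with
    | zero => rfl
    | succ k ih => rw [pow_succ, pow_succ, ← ih]; rfl
  apply Subtype.ext
  apply Subtype.ext
  rw [coe_pow m.factorial, hUpow]
  rfl
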